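/- arXiv:1708.05114 — 8 statements merged into one kernel-verified Lean document; each statement's English description precedes it below -/
import Mathlib

section
/- Let η_c, η_d ∈ (0,1], let p⁺ ≥ 0 and p⁻ ≤ 0, and let x ∈ ℝ. Then there exist P_c, P_d ∈ ℝ satisfying 0 ≤ P_c ≤ p⁺, p⁻ ≤ P_d ≤ 0, P_c·P_d = 0 (charging and discharging do not occur simultaneously), and x = P_c/η_c + η_d·P_d, if and only if η_d·p⁻ ≤ x ≤ p⁺/η_c. -/
/-- The per-interval power constraints on the charging/discharging split
`(P_c, P_d)` with complementarity are equivalent to the two inequalities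
`η_d·p⁻ ≤ x ≤ p⁺/η_c` on the grid-side power `x` alone. -/
theorem charge_discharge_split_iff
    (ηc ηd : ℝ) (hηc : ηc ∈ Set.Ioc (0 : ℝ) 1) (hηd : ηd ∈ Set.Ioc (0 : ℝ) 1)
    (pplus pminus : ℝ) (hpplus : 0 ≤ pplus) (hpminus : pminus ≤ 0) (x : ℝ) :
    (∃ Pc Pd : ℝ, 0 ≤ Pc ∧ Pc ≤ pplus ∧ pminus ≤ Pd ∧ Pd ≤ 0 ∧
        Pc * Pd = 0 ∧ x = Pc / ηc + ηd * Pd) ↔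
      ηd * pminus ≤ x ∧ x ≤ pplus / ηc := by
  obtain ⟨hc0, hc1⟩ := hηc
  obtain ⟨hd0, hd1⟩ := hηd
  constructor
  · rintro ⟨Pc, Pd, h1, h2, h3, h4, _, rfl⟩
    constructor
    · have : ηd * pminus ≤ ηd * Pd := by nlinarith
      have hPc : 0 ≤ Pc / ηc := div_nonneg h1 hc0.le
      linarith
    · have hPd : ηd * Pd ≤ 0 := by nlinarith
      have hdiv : Pc / ηc ≤ pplus / ηc := by gcongr
      linarith
  · rintro ⟨hlo, hhi⟩
    rcases le_or_gt 0 x with hx | hx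
    · refine ⟨ηc * x, 0, by positivity, ?_, hpminus, le_refl 0, by ring, ?_⟩
      · rw [le_div_iff₀ hc0] at hhi; nlinarith
      · field_simp; ring
    · refine ⟨0, x / ηd, le_refl 0, hpplus, ?_, ?_, by ring, ?_⟩
      · rw [le_div_iff₀ hd0]; nlinarith
      · exact div_nonpos_of_nonpos_of_nonneg hx.le hd0.le
      · field_simp; ring
end

section
/- Let η_c, η_d ∈ ℝ with 0 < η_c, 0 < η_d and η_c·η_d ≤ 1, and define the resource-side power function g(x) = η_c·max(x,0) + (1/η_d)·min(x,0). Then for all P ≥ 0, R ≥ 0, and s ∈ [−1, 1], g(P − s·R) ≥ η_c·P − R·((1 + η_c·η_d)·s + (1 − η_c·η_d))/(2·η_d). -/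
/-- Affine-in-`s` lower bound on the resource-side power for a nonnegative
grid-side baseline `P`: for `s ∈ [-1,1]` and `R ≥ 0`,
`g(P - s·R) ≥ η_c·P - R·((1+η_c·η_d)·s + (1-η_c·η_d))/(2·η_d)`. -/
theorem resource_power_affine_lower_bound_nonneg
    (ηc ηd : ℝ) (hηc : 0 < ηc) (hηd : 0 < ηd) (h : ηc * ηd ≤ 1)
    (g : ℝ → ℝ) (hg : ∀ x, g x = ηc * max x 0 + (1 / ηd) * min x 0)
    (P R s : ℝ) (hP : 0 ≤ P) (hR : 0 ≤ R) (hs : s ∈ Set.Icc (-1 : ℝ) 1) :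
    g (P - s * R) ≥
      ηc * P - R * ((1 + ηc * ηd) * s + (1 - ηc * ηd)) / (2 * ηd) := by
  obtain ⟨hs1, hs2⟩ := hs
  rw [hg, ge_iff_le]
  have hD : R * ((1 + ηc * ηd) * s + (1 - ηc * ηd)) / (2 * ηd) * (2 * ηd)
      = R * ((1 + ηc * ηd) * s + (1 - ηc * ηd)) := by field_simp
  rcases le_or_gt 0 (P - s * R) with hx | hx
  · rw [max_eq_left hx, min_eq_right hx]
    have h1 : 0 ≤ (1 - ηc * ηd) * (1 + s) := by nlinarith
    nlinarith [mul_nonneg hR h1]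
  · rw [max_eq_right hx.le, min_eq_left hx.le]
    have h1 : 0 ≤ (1 - ηc * ηd) * (1 - s) := by nlinarith
    have h2 : (1/ηd) * (P - s*R) * ηd = P - s*R := by field_simp
    nlinarith [mul_nonneg hR h1, mul_nonneg hP (sub_nonneg.2 h)]
end

section
/- Let η_c, η_d ∈ ℝ with 0 < η_c, 0 < η_d and η_c·η_d ≤ 1, and define the resource-side power function g(x) = η_c·max(x,0) + (1/η_d)·min(x,0). Then for all P ≤ 0, R ≥ 0, and s ∈ [−1, 1], g(P − s·R) ≥ P/η_d − R·((1 + η_c·η_d)·s + (1 − η_c·η_d))/(2·η_d). -/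
/-- Affine-in-`s` lower bound on the resource-side power for a nonpositive
grid-side baseline `P`: for `s ∈ [-1,1]` and `R ≥ 0`,
`g(P - s·R) ≥ P/η_d - R·((1+η_c·η_d)·s + (1-η_c·η_d))/(2·η_d)`. -/
theorem resource_power_affine_lower_bound_nonpos
    (ηc ηd : ℝ) (hηc : 0 < ηc) (hηd : 0 < ηd) (h : ηc * ηd ≤ 1)
    (g : ℝ → ℝ) (hg : ∀ x, g x = ηc * max x 0 + (1 / ηd) * min x 0)
    (P R s : ℝ) (hP : P ≤ 0) (hR : 0 ≤ R) (hs : s ∈ Set.Icc (-1 : ℝ) 1) :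
    g (P - s * R) ≥
      P / ηd - R * ((1 + ηc * ηd) * s + (1 - ηc * ηd)) / (2 * ηd) := by
  obtain ⟨hs1, hs2⟩ := hs
  rw [hg, ge_iff_le, div_sub_div _ _ (ne_of_gt hηd) (by positivity : (2:ℝ) * ηd ≠ 0),
    div_le_iff₀ (by positivity : (0:ℝ) < ηd * (2 * ηd))]
  rcases le_or_gt 0 (P - s * R) with hx | hx
  · rw [max_eq_left hx, min_eq_right hx]
    nlinarith [mul_nonneg hR (sub_nonneg.2 h), mul_nonneg (mul_nonneg hR (sub_nonneg.2 h)) (by linarith : 0 ≤ s + 1), mul_nonpos_of_nonpos_of_nonneg hP (sub_nonneg.2 h)]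
  · rw [max_eq_right hx.le, min_eq_left hx.le]
    have hEq : (ηc * (0:ℝ) + 1 / ηd * (P - s * R)) * (ηd * (2 * ηd)) = (P - s * R) * (2 * ηd) := by
      field_simp; ring
    rw [hEq]
    nlinarith [mul_nonneg (mul_nonneg hR (sub_nonneg.2 h)) (by linarith : 0 ≤ 1 - s)]
end

section
/- (Proposition 2, case P ≥ 0, deterministic form.) Let n ≥ 1, Δd > 0, η_c, η_d ∈ (0,1], p⁺ ≥ 0, p⁻ ≤ 0, e⁻, e⁺, e₀ ∈ ℝ, P ≥ 0, R ≥ 0, and signals s : Fin n → [−1,1]; write s^a_d = (1/(d+1))·Σ_{κ≤d} s(κ) for the running average. Suppose for every d: (i) η_c·(P − s(d)·R) ≤ p⁺; (ii) −(P − s(d)·R)/η_d + p⁻ ≤ 0; (iii) −η_c·(d+1)·Δd·P + ((1+η_c·η_d)/(2η_d)·s^a_d + (1−η_c·η_d)/(2η_d))·(d+1)·Δd·R − e₀ + e⁻ ≤ 0; (iv) η_c·(d+1)·Δd·P − η_c·s^a_d·(d+1)·Δd·R + e₀ − e⁺ ≤ 0. Then there exist P_c, P_d : Fin n → ℝ such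 that for every d: P − s(d)·R = P_c(d)/η_c + η_d·P_d(d), 0 ≤ P_c(d) ≤ p⁺, p⁻ ≤ P_d(d) ≤ 0, P_c(d)·P_d(d) = 0, and e⁻ ≤ e₀ + Δd·Σ_{κ≤d}(P_c(κ) + P_d(κ)) ≤ e⁺. -/
open Finset

/-- Proposition 2 (case `P ≥ 0`, deterministic form): the eliminated
constraints (26)–(29) are a safe approximation of the original per-interval
power, complementarity and cumulative-energy constraints (16)–(22). -/
theorem prop2_safe_approx_nonneg
    (n : ℕ) (hn : 1 ≤ n) (Δd : ℝ) (hΔd : 0 < Δd)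
    (ηc ηd : ℝ) (hηc : ηc ∈ Set.Ioc (0 : ℝ) 1) (hηd : ηd ∈ Set.Ioc (0 : ℝ) 1)
    (pplus pminus : ℝ) (hpplus : 0 ≤ pplus) (hpminus : pminus ≤ 0)
    (eminus eplus e₀ : ℝ) (P R : ℝ) (hP : 0 ≤ P) (hR : 0 ≤ R)
    (s : Fin n → ℝ) (hs : ∀ d, s d ∈ Set.Icc (-1 : ℝ) 1)
    (sa : Fin n → ℝ)
    (hsa : ∀ d : Fin n, sa d = (1 / ((d : ℕ) + 1 : ℝ)) * ∑ κ ∈ Iic d, s κ)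
    (h1 : ∀ d : Fin n, ηc * (P - s d * R) ≤ pplus)
    (h2 : ∀ d : Fin n, -(P - s d * R) / ηd + pminus ≤ 0)
    (h3 : ∀ d : Fin n,
      -ηc * (((d : ℕ) + 1 : ℝ)) * Δd * P +
        ((1 + ηc * ηd) / (2 * ηd) * sa d + (1 - ηc * ηd) / (2 * ηd)) *
          (((d : ℕ) + 1 : ℝ)) * Δd * R - e₀ + eminus ≤ 0)
    (h4 : ∀ d : Fin n,
      ηc * (((d : ℕ) + 1 : ℝ)) * Δd * P -
        ηc * sa d * (((d : ℕ) + 1 : ℝ)) * Δd * R + e₀ - eplus ≤ 0) :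
    ∃ Pc Pd : Fin n → ℝ, ∀ d : Fin n,
      P - s d * R = Pc d / ηc + ηd * Pd d ∧
      0 ≤ Pc d ∧ Pc d ≤ pplus ∧ pminus ≤ Pd d ∧ Pd d ≤ 0 ∧
      Pc d * Pd d = 0 ∧
      eminus ≤ e₀ + Δd * ∑ κ ∈ Iic d, (Pc κ + Pd κ) ∧
      e₀ + Δd * ∑ κ ∈ Iic d, (Pc κ + Pd κ) ≤ eplus := by
  obtain ⟨hηc0, hηc1⟩ := hηc
  obtain ⟨hηd0, hηd1⟩ := hηd
  have h1m : (0:ℝ) ≤ 1 - ηc * ηd := by nlinarith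
  have hb : (0:ℝ) ≤ (1 - ηc * ηd) / (2 * ηd) := div_nonneg h1m (by linarith)
  have ha : (1 + ηc * ηd) / (2 * ηd) = ηc + (1 - ηc * ηd) / (2 * ηd) := by
    field_simp; ring
  set g : Fin n → ℝ := fun d => P - s d * R with hg
  refine ⟨fun d => if 0 ≤ g d then ηc * g d else 0,
          fun d => if 0 ≤ g d then 0 else g d / ηd, ?_⟩
  have key_low : ∀ κ : Fin n,
      ηc * P - ((1 + ηc * ηd) / (2 * ηd) * s κ + (1 - ηc * ηd) / (2 * ηd)) * R ≤
        (if 0 ≤ g κ then ηc * g κ else 0) + (if 0 ≤ g κ then 0 else g κ / ηd) := by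
    intro κ
    obtain ⟨hsl, hsu⟩ := hs κ
    by_cases hκ : 0 ≤ g κ
    · simp only [if_pos hκ]
      rw [ha]
      have hgκ : g κ = P - s κ * R := rfl
      nlinarith [mul_nonneg (mul_nonneg hb (by linarith : (0:ℝ) ≤ s κ + 1)) hR]
    · simp only [if_neg hκ]
      push_neg at hκ
      rw [show (0:ℝ) + g κ / ηd = g κ / ηd by ring, le_div_iff₀ hηd0]
      have hgκ : g κ = P - s κ * R := rfl
      have hexp : ((1 + ηc * ηd) / (2 * ηd) * s κ + (1 - ηc * ηd) / (2 * ηd)) * ηd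
          = (1 + ηc * ηd) / 2 * s κ + (1 - ηc * ηd) / 2 := by
        field_simp
      rw [hgκ]
      nlinarith [mul_nonneg hP h1m,
        mul_nonneg (mul_nonneg hR h1m) (by linarith : (0:ℝ) ≤ 1 - s κ)]
  have key_high : ∀ κ : Fin n,
      (if 0 ≤ g κ then ηc * g κ else 0) + (if 0 ≤ g κ then 0 else g κ / ηd) ≤
        ηc * (P - s κ * R) := by
    intro κ
    by_cases hκ : 0 ≤ g κ
    · simp only [if_pos hκ, add_zero]; exact le_of_eq rfl
    · simp only [if_neg hκ]
      push_neg at hκ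
      rw [show (0:ℝ) + g κ / ηd = g κ / ηd by ring, div_le_iff₀ hηd0]
      have hgκ : ηc * (P - s κ * R) = ηc * g κ := rfl
      rw [hgκ]
      nlinarith [mul_nonneg h1m (by linarith : (0:ℝ) ≤ -g κ)]
  intro d
  have hdpos : (0:ℝ) < ((d : ℕ) + 1 : ℝ) := by positivity
  have hsum_s : ∑ κ ∈ Iic d, s κ = ((d : ℕ) + 1 : ℝ) * sa d := by
    rw [hsa d]; field_simp
  have hcard : ((#(Iic d) : ℕ) : ℝ) = ((d : ℕ) + 1 : ℝ) := by
    rw [Fin.card_Iic]; push_cast; ring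
  -- lower energy bound
  have heq_low : ∑ κ ∈ Iic d,
      (ηc * P - ((1 + ηc * ηd) / (2 * ηd) * s κ + (1 - ηc * ηd) / (2 * ηd)) * R)
      = ((d : ℕ) + 1 : ℝ) * (ηc * P)
        - ((1 + ηc * ηd) / (2 * ηd) * sa d + (1 - ηc * ηd) / (2 * ηd)) *
            ((d : ℕ) + 1 : ℝ) * R := by
    have h0 : ∀ κ ∈ Iic d,
        ηc * P - ((1 + ηc * ηd) / (2 * ηd) * s κ + (1 - ηc * ηd) / (2 * ηd)) * R
        = (ηc * P - (1 - ηc * ηd) / (2 * ηd) * R)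
          - ((1 + ηc * ηd) / (2 * ηd) * R) * s κ := fun κ _ => by ring
    rw [Finset.sum_congr rfl h0, Finset.sum_sub_distrib, Finset.sum_const,
      ← Finset.mul_sum, hsum_s, nsmul_eq_mul, hcard]
    ring
  have heq_high : ∑ κ ∈ Iic d, ηc * (P - s κ * R)
      = ηc * ((d : ℕ) + 1 : ℝ) * P - ηc * sa d * ((d : ℕ) + 1 : ℝ) * R := by
    have h0 : ∀ κ ∈ Iic d, ηc * (P - s κ * R) = ηc * P - (ηc * R) * s κ :=
      fun κ _ => by ring
    rw [Finset.sum_congr rfl h0, Finset.sum_sub_distrib, Finset.sum_const,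
      ← Finset.mul_sum, hsum_s, nsmul_eq_mul, hcard]
    ring
  have hlow := Finset.sum_le_sum (s := Iic d) (fun κ _ => key_low κ)
  have hhigh := Finset.sum_le_sum (s := Iic d) (fun κ _ => key_high κ)
  rw [heq_low] at hlow
  rw [heq_high] at hhigh
  have hmul_low := mul_le_mul_of_nonneg_left hlow hΔd.le
  have hmul_high := mul_le_mul_of_nonneg_left hhigh hΔd.le
  refine ⟨?_, ?_, ?_, ?_, ?_, ?_, ?_, ?_⟩
  · by_cases hκ : 0 ≤ g d
    · simp only [if_pos hκ]
      field_simp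
      simp [hg]
    · simp only [if_neg hκ]
      rw [show (0:ℝ) / ηc = 0 by ring]
      field_simp
      simp [hg]
  · by_cases hκ : 0 ≤ g d
    · simp only [if_pos hκ]; positivity
    · simp only [if_neg hκ]; exact le_rfl
  · by_cases hκ : 0 ≤ g d
    · simp only [if_pos hκ]; exact h1 d
    · simp only [if_neg hκ]; exact hpplus
  · by_cases hκ : 0 ≤ g d
    · simp only [if_pos hκ]; exact hpminus
    · simp only [if_neg hκ]
      have := h2 d
      have hgd : g d = P - s d * R := rfl
      rw [hgd]
      rw [neg_div] at this
      linarith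
  · by_cases hκ : 0 ≤ g d
    · simp only [if_pos hκ]; exact le_rfl
    · simp only [if_neg hκ]
      push_neg at hκ
      exact le_of_lt (div_neg_of_neg_of_pos hκ hηd0)
  · by_cases hκ : 0 ≤ g d
    · simp only [if_pos hκ, mul_zero]
    · simp only [if_neg hκ, zero_mul]
  · linarith [h3 d, hmul_low]
  · linarith [h4 d, hmul_high]
end

section
/- (Proposition 2, case P ≤ 0, deterministic form.) Let n ≥ 1, Δd > 0, η_c, η_d ∈ (0,1], p⁺ ≥ 0, p⁻ ≤ 0, e⁻, e⁺, e₀ ∈ ℝ, P ≤ 0, R ≥ 0, and signals s : Fin n → [−1,1]; write s^a_d = (1/(d+1))·Σ_{κ≤d} s(κ) for the running average. Suppose for every d: (i) η_c·(P − s(d)·R) ≤ p⁺; (ii) −(P − s(d)·R)/η_d + p⁻ ≤ 0; (iii) −(1/η_d)·(d+1)·Δd·P + ((1+η_c·η_d)/(2η_d)·s^a_d + (1−η_c·η_d)/(2η_d))·(d+1)·Δd·R − e₀ + e⁻ ≤ 0; (iv) η_c·(d+1)·Δd·P − η_c·s^a_d·(d+1)·Δd·R + e₀ − e⁺ ≤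 0. Then there exist P_c, P_d : Fin n → ℝ such that for every d: P − s(d)·R = P_c(d)/η_c + η_d·P_d(d), 0 ≤ P_c(d) ≤ p⁺, p⁻ ≤ P_d(d) ≤ 0, P_c(d)·P_d(d) = 0, and e⁻ ≤ e₀ + Δd·Σ_{κ≤d}(P_c(κ) + P_d(κ)) ≤ e⁺. -/
open Finset

/-- Pointwise bounds for the constructed dispatch. -/
lemma dispatch_bounds (ηc ηd P R σ : ℝ)
    (hηc0 : 0 < ηc) (hηc1 : ηc ≤ 1) (hηd0 : 0 < ηd) (hηd1 : ηd ≤ 1)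
    (hP : P ≤ 0) (hR : 0 ≤ R) (hσ1 : -1 ≤ σ) (hσ2 : σ ≤ 1) :
    (if 0 ≤ P - σ * R then ηc * (P - σ * R) else (P - σ * R) / ηd)
        ≤ ηc * (P - σ * R) ∧
    P / ηd - ((1 + ηc * ηd) / (2 * ηd) * σ + (1 - ηc * ηd) / (2 * ηd)) * R
        ≤ (if 0 ≤ P - σ * R then ηc * (P - σ * R) else (P - σ * R) / ηd) := by
  have hηd0' : (0:ℝ) < 2 * ηd := by linarith
  have hcc : (0:ℝ) ≤ 1 - ηc * ηd := by nlinarith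
  have key : P / ηd - ((1 + ηc * ηd) / (2 * ηd) * σ + (1 - ηc * ηd) / (2 * ηd)) * R
      = (2 * P - ((1 + ηc * ηd) * σ + (1 - ηc * ηd)) * R) / (2 * ηd) := by
    field_simp
  split_ifs with h
  · refine ⟨le_rfl, ?_⟩
    rw [key, div_le_iff₀ hηd0']
    nlinarith [mul_nonneg (mul_nonneg hR (by linarith : (0:ℝ) ≤ 1 + σ)) hcc,
      mul_nonneg (neg_nonneg.mpr hP) hcc]
  · push_neg at h
    constructor
    · rw [div_le_iff₀ hηd0]
      nlinarith [mul_nonneg (by linarith : (0:ℝ) ≤ σ * R - P) hcc]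
    · rw [key, div_le_div_iff₀ hηd0' hηd0]
      nlinarith [mul_nonneg hηd0.le
        (mul_nonneg (mul_nonneg hR (by linarith : (0:ℝ) ≤ 1 - σ)) hcc)]

/-- Proposition 2 (case `P ≤ 0`, deterministic form): the eliminated
constraints (26)–(29) are a safe approximation of the original per-interval
power, complementarity and cumulative-energy constraints (16)–(22). -/
theorem prop2_safe_approx_nonpos
    (n : ℕ) (hn : 1 ≤ n) (Δd : ℝ) (hΔd : 0 < Δd)
    (ηc ηd : ℝ) (hηc : ηc ∈ Set.Ioc (0 : ℝ) 1) (hηd : ηd ∈ Set.Ioc (0 : ℝ) 1)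
    (pplus pminus : ℝ) (hpplus : 0 ≤ pplus) (hpminus : pminus ≤ 0)
    (eminus eplus e₀ : ℝ) (P R : ℝ) (hP : P ≤ 0) (hR : 0 ≤ R)
    (s : Fin n → ℝ) (hs : ∀ d, s d ∈ Set.Icc (-1 : ℝ) 1)
    (sa : Fin n → ℝ)
    (hsa : ∀ d : Fin n, sa d = (1 / ((d : ℕ) + 1 : ℝ)) * ∑ κ ∈ Iic d, s κ)
    (h1 : ∀ d : Fin n, ηc * (P - s d * R) ≤ pplus)
    (h2 : ∀ d : Fin n, -(P - s d * R) / ηd + pminus ≤ 0)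
    (h3 : ∀ d : Fin n,
      -(1 / ηd) * (((d : ℕ) + 1 : ℝ)) * Δd * P +
        ((1 + ηc * ηd) / (2 * ηd) * sa d + (1 - ηc * ηd) / (2 * ηd)) *
          (((d : ℕ) + 1 : ℝ)) * Δd * R - e₀ + eminus ≤ 0)
    (h4 : ∀ d : Fin n,
      ηc * (((d : ℕ) + 1 : ℝ)) * Δd * P -
        ηc * sa d * (((d : ℕ) + 1 : ℝ)) * Δd * R + e₀ - eplus ≤ 0) :
    ∃ Pc Pd : Fin n → ℝ, ∀ d : Fin n,
      P - s d * R = Pc d / ηc + ηd * Pd d ∧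
      0 ≤ Pc d ∧ Pc d ≤ pplus ∧ pminus ≤ Pd d ∧ Pd d ≤ 0 ∧
      Pc d * Pd d = 0 ∧
      eminus ≤ e₀ + Δd * ∑ κ ∈ Iic d, (Pc κ + Pd κ) ∧
      e₀ + Δd * ∑ κ ∈ Iic d, (Pc κ + Pd κ) ≤ eplus := by
  obtain ⟨hηc0, hηc1⟩ := hηc
  obtain ⟨hηd0, hηd1⟩ := hηd
  refine ⟨fun d => if 0 ≤ P - s d * R then ηc * (P - s d * R) else 0,
          fun d => if 0 ≤ P - s d * R then 0 else (P - s d * R) / ηd,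
          fun d => ?_⟩
  have hsum : ∀ κ : Fin n,
      ((if 0 ≤ P - s κ * R then ηc * (P - s κ * R) else 0) +
        (if 0 ≤ P - s κ * R then 0 else (P - s κ * R) / ηd)) =
      (if 0 ≤ P - s κ * R then ηc * (P - s κ * R) else (P - s κ * R) / ηd) := by
    intro κ; split_ifs <;> ring
  have hbnd := fun κ : Fin n =>
    dispatch_bounds ηc ηd P R (s κ) hηc0 hηc1 hηd0 hηd1 hP hR (hs κ).1 (hs κ).2
  -- cumulative sum bounds
  have hcardpos : (0:ℝ) < ((d : ℕ) + 1 : ℝ) := by positivity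
  have hsasum : sa d * ((d : ℕ) + 1 : ℝ) = ∑ κ ∈ Iic d, s κ := by
    rw [hsa d]; field_simp
  have hsum_upper : ∑ κ ∈ Iic d,
      ((if 0 ≤ P - s κ * R then ηc * (P - s κ * R) else 0) +
        (if 0 ≤ P - s κ * R then 0 else (P - s κ * R) / ηd)) ≤
      ∑ κ ∈ Iic d, ηc * (P - s κ * R) := by
    refine Finset.sum_le_sum fun κ _ => ?_
    rw [hsum κ]; exact (hbnd κ).1
  have hsum_lower : ∑ κ ∈ Iic d,
      (P / ηd - ((1 + ηc * ηd) / (2 * ηd) * s κ + (1 - ηc * ηd) / (2 * ηd)) * R) ≤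
      ∑ κ ∈ Iic d,
      ((if 0 ≤ P - s κ * R then ηc * (P - s κ * R) else 0) +
        (if 0 ≤ P - s κ * R then 0 else (P - s κ * R) / ηd)) := by
    refine Finset.sum_le_sum fun κ _ => ?_
    rw [hsum κ]; exact (hbnd κ).2
  have hcard : ((Iic d).card : ℝ) = ((d : ℕ) + 1 : ℝ) := by
    rw [Fin.card_Iic]; push_cast; ring
  have hupper : ∑ κ ∈ Iic d, ηc * (P - s κ * R) =
      ηc * ((d : ℕ) + 1 : ℝ) * P - ηc * sa d * ((d : ℕ) + 1 : ℝ) * R := by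
    have hc : ∀ κ ∈ Iic d, ηc * (P - s κ * R) = ηc * P - (ηc * R) * s κ := by
      intros; ring
    rw [Finset.sum_congr rfl hc, Finset.sum_sub_distrib, Finset.sum_const,
      ← Finset.mul_sum, ← hsasum, nsmul_eq_mul, hcard]
    ring
  have hlower : ∑ κ ∈ Iic d,
      (P / ηd - ((1 + ηc * ηd) / (2 * ηd) * s κ + (1 - ηc * ηd) / (2 * ηd)) * R) =
      (1 / ηd) * ((d : ℕ) + 1 : ℝ) * P -
        ((1 + ηc * ηd) / (2 * ηd) * sa d + (1 - ηc * ηd) / (2 * ηd)) *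
          ((d : ℕ) + 1 : ℝ) * R := by
    have hc : ∀ κ ∈ Iic d,
        P / ηd - ((1 + ηc * ηd) / (2 * ηd) * s κ + (1 - ηc * ηd) / (2 * ηd)) * R =
        (P / ηd - (1 - ηc * ηd) / (2 * ηd) * R) - ((1 + ηc * ηd) / (2 * ηd) * R) * s κ := by
      intros; ring
    rw [Finset.sum_congr rfl hc, Finset.sum_sub_distrib, Finset.sum_const,
      ← Finset.mul_sum, ← hsasum, nsmul_eq_mul, hcard]
    ring
  refine ⟨?_, ?_, ?_, ?_, ?_, ?_, ?_, ?_⟩ <;> dsimp only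
  · split_ifs with h <;> field_simp <;> ring
  · split_ifs with h
    · exact mul_nonneg hηc0.le h
    · exact le_rfl
  · split_ifs with h
    · exact h1 d
    · exact hpplus
  · split_ifs with h
    · exact hpminus
    · have := h2 d
      rw [neg_div] at this
      linarith
  · split_ifs with h
    · exact le_rfl
    · push_neg at h
      exact div_nonpos_of_nonpos_of_nonneg h.le hηd0.le
  · split_ifs with h <;> ring
  · have h3' := h3 d
    have : eminus ≤ e₀ + Δd * ∑ κ ∈ Iic d,
        (P / ηd - ((1 + ηc * ηd) / (2 * ηd) * s κ + (1 - ηc * ηd) / (2 * ηd)) * R) := by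
      rw [hlower]
      nlinarith
    calc eminus ≤ _ := this
      _ ≤ _ := by
        have := mul_le_mul_of_nonneg_left hsum_lower hΔd.le
        linarith
  · have h4' := h4 d
    have := mul_le_mul_of_nonneg_left hsum_upper hΔd.le
    rw [hupper] at this
    nlinarith
end

section
/- Let ι be a finite type and p, q : ι → ℝ probability vectors (p_i, q_i ≥ 0 for all i, Σ_i p_i = Σ_i q_i = 1) with q_i > 0 for all i. Then for every subset A ⊆ ι, (Σ_{i∈A} p_i − Σ_{i∈A} q_i)² ≤ (Σ_i q_i·(p_i/q_i − 1)²) · (Σ_{i∈A} q_i) · (1 − Σ_{i∈A} q_i). -/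
open Finset

/-- χ²-divergence bound on deviation of event probabilities:
`(p(A) - q(A))² ≤ I_φ(p,q) · q(A) · (1 - q(A))`. -/
theorem chi_sq_event_probability_bound
    {ι : Type*} [Fintype ι] (p q : ι → ℝ)
    (hp : ∀ i, 0 ≤ p i) (hq : ∀ i, 0 < q i)
    (hp1 : ∑ i, p i = 1) (hq1 : ∑ i, q i = 1) (A : Finset ι) :
    (∑ i ∈ A, p i - ∑ i ∈ A, q i) ^ 2 ≤
      (∑ i, q i * (p i / q i - 1) ^ 2) * (∑ i ∈ A, q i) *
        (1 - ∑ i ∈ A, q i) := by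
  classical
  set t : ℝ := ∑ i ∈ A, q i with ht
  set ind : ι → ℝ := fun i => if i ∈ A then (1 : ℝ) else 0 with hind
  have hzero : ∑ i, (p i - q i) = 0 := by
    rw [Finset.sum_sub_distrib, hp1, hq1]; ring
  have hindsum : ∀ f : ι → ℝ, ∑ i, f i * ind i = ∑ i ∈ A, f i := by
    intro f
    simp only [hind, mul_ite, mul_one, mul_zero]
    rw [Finset.sum_ite_mem]
    congr 1
    exact Finset.univ_inter A
  have h1 : ∑ i, (p i - q i) * (ind i - t) = ∑ i ∈ A, p i - ∑ i ∈ A, q i := by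
    have : ∑ i, (p i - q i) * (ind i - t)
        = ∑ i, ((p i - q i) * ind i) - t * ∑ i, (p i - q i) := by
      rw [Finset.mul_sum, ← Finset.sum_sub_distrib]
      apply Finset.sum_congr rfl; intro i _; ring
    rw [this, hzero, hindsum (fun i => p i - q i), Finset.sum_sub_distrib]
    ring
  have h2 : ∑ i, q i * (ind i - t) ^ 2 = t * (1 - t) := by
    have hsq : ∀ i, ind i ^ 2 = ind i := by
      intro i; simp only [hind]; split <;> norm_num
    have : ∑ i, q i * (ind i - t) ^ 2
        = ∑ i, (q i * ind i - 2 * t * (q i * ind i) + t ^ 2 * q i) := by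
      apply Finset.sum_congr rfl; intro i _
      linear_combination q i * hsq i
    rw [this, Finset.sum_add_distrib, Finset.sum_sub_distrib, ← Finset.mul_sum,
      ← Finset.mul_sum, hindsum q, hq1, ← ht]
    ring
  have key := Finset.sum_mul_sq_le_sq_mul_sq Finset.univ
    (fun i => (p i - q i) / Real.sqrt (q i))
    (fun i => Real.sqrt (q i) * (ind i - t))
  have hfg : ∀ i, (p i - q i) / Real.sqrt (q i) * (Real.sqrt (q i) * (ind i - t))
      = (p i - q i) * (ind i - t) := by
    intro i
    have hs : Real.sqrt (q i) ≠ 0 := Real.sqrt_ne_zero'.2 (hq i)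
    field_simp
  have hf2 : ∀ i, ((p i - q i) / Real.sqrt (q i)) ^ 2 = q i * (p i / q i - 1) ^ 2 := by
    intro i
    have hqi := (hq i).ne'
    rw [div_pow, Real.sq_sqrt (hq i).le]
    field_simp
  have hg2 : ∀ i, (Real.sqrt (q i) * (ind i - t)) ^ 2 = q i * (ind i - t) ^ 2 := by
    intro i
    rw [mul_pow, Real.sq_sqrt (hq i).le]
  calc (∑ i ∈ A, p i - ∑ i ∈ A, q i) ^ 2
      = (∑ i, (p i - q i) / Real.sqrt (q i) * (Real.sqrt (q i) * (ind i - t))) ^ 2 := by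
        rw [Finset.sum_congr rfl (fun i _ => hfg i), h1]
    _ ≤ (∑ i, ((p i - q i) / Real.sqrt (q i)) ^ 2) *
        (∑ i, (Real.sqrt (q i) * (ind i - t)) ^ 2) := key
    _ = (∑ i, q i * (p i / q i - 1) ^ 2) * (t * (1 - t)) := by
        rw [Finset.sum_congr rfl (fun i _ => hf2 i),
          Finset.sum_congr rfl (fun i _ => hg2 i), h2]
    _ = (∑ i, q i * (p i / q i - 1) ^ 2) * t * (1 - t) := by ring
end

section
/- (Adjusted tolerance for the χ²-divergence ball.) Let ε ∈ (0, 1/2] and ρ > 0, and define ε' = ε − (√(ρ² + 4ρ(ε − ε²)) − (1 − 2ε)·ρ)/(2ρ + 2). Then (a) 0 ≤ ε' ≤ ε, and (b) for every a ∈ [0, ε'], a + √(ρ·a·(1 − a)) ≤ ε. -/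
/-- Adjusted tolerance for the χ²-divergence ball: with
`ε' = ε - (√(ρ² + 4ρ(ε - ε²)) - (1 - 2ε)·ρ)/(2ρ + 2)`, we have
(a) `0 ≤ ε' ≤ ε`, and (b) `a + √(ρ·a·(1-a)) ≤ ε` for all `a ∈ [0, ε']`. -/
theorem adjusted_tolerance_chi_sq
    (ε ρ : ℝ) (hε : ε ∈ Set.Ioc (0 : ℝ) (1 / 2)) (hρ : 0 < ρ)
    (ε' : ℝ)
    (hε' : ε' = ε - (Real.sqrt (ρ ^ 2 + 4 * ρ * (ε - ε ^ 2)) -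
      (1 - 2 * ε) * ρ) / (2 * ρ + 2)) :
    (0 ≤ ε' ∧ ε' ≤ ε) ∧
      ∀ a ∈ Set.Icc (0 : ℝ) ε', a + Real.sqrt (ρ * a * (1 - a)) ≤ ε := by
  obtain ⟨hε0, hε2⟩ := hε
  set D := Real.sqrt (ρ ^ 2 + 4 * ρ * (ε - ε ^ 2)) with hDdef
  have hDnn : 0 ≤ D := Real.sqrt_nonneg _
  have hD2 : D ^ 2 = ρ ^ 2 + 4 * ρ * (ε - ε ^ 2) :=
    Real.sq_sqrt (by nlinarith [sq_nonneg ρ, mul_pos hρ hε0, mul_pos hρ (mul_pos hε0 hε0)])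
  have hden : (0:ℝ) < 2 * ρ + 2 := by linarith
  have hε'eq : ε' = (ρ + 2 * ε - D) / (2 * ρ + 2) := by
    rw [hε']; field_simp; ring
  have hDle : D ≤ ρ + 2 * ε := by nlinarith [hD2, hDnn]
  have hDge : (1 - 2 * ε) * ρ ≤ D := by nlinarith [hD2, hDnn]
  have hε'0 : 0 ≤ ε' := by
    rw [hε'eq]; exact div_nonneg (by linarith) (by linarith)
  have hε'ε : ε' ≤ ε := by
    rw [hε']
    have : 0 ≤ (D - (1 - 2 * ε) * ρ) / (2 * ρ + 2) :=
      div_nonneg (by linarith) (by linarith)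
    linarith
  refine ⟨⟨hε'0, hε'ε⟩, ?_⟩
  rintro a ⟨ha0, haε'⟩
  have h1 : 0 ≤ (ρ + 2 * ε - D) - a * (2 * ρ + 2) := by
    have h' : a ≤ (ρ + 2 * ε - D) / (2 * ρ + 2) := hε'eq ▸ haε'
    have := (le_div_iff₀ hden).mp h'
    linarith
  have h2 : 0 ≤ (ρ + 2 * ε + D) - a * (2 * ρ + 2) := by linarith
  have key : ρ * a * (1 - a) ≤ (ε - a) ^ 2 := by
    nlinarith [mul_nonneg h1 h2, hD2]
  have hsq : Real.sqrt (ρ * a * (1 - a)) ≤ ε - a := by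
    rw [show ε - a = Real.sqrt ((ε - a) ^ 2) from (Real.sqrt_sq (by linarith)).symm]
    exact Real.sqrt_le_sqrt key
  linarith
end

section
/- (Data-driven distributionally robust chance constraint over a χ²-divergence ball, discrete form.) Let ι be a finite type and p, q : ι → ℝ probability vectors (p_i, q_i ≥ 0 for all i, Σ_i p_i = Σ_i q_i = 1) with q_i > 0 for all i. Let ε ∈ (0, 1/2], ρ > 0, and define ε' = ε − (√(ρ² + 4ρ(ε − ε²)) − (1 − 2ε)·ρ)/(2ρ + 2). If Σ_i q_i·(p_i/q_i − 1)² ≤ ρ and Σ_{i∈A} q_i ≥ 1 − ε' for a subset A ⊆ ι, then Σ_{i∈A} p_i ≥ 1 − ε. -/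
open Finset

set_option maxHeartbeats 1600000 in
/-- Data-driven distributionally robust chance constraint over a χ²-divergence
ball (discrete form): if `I_φ(p,q) ≤ ρ` and `q(A) ≥ 1 - ε'`, then
`p(A) ≥ 1 - ε`, where `ε'` is the adjusted tolerance of Proposition 3. -/
theorem chi_sq_ball_chance_constraint
    {ι : Type*} [Fintype ι] (p q : ι → ℝ)
    (hp : ∀ i, 0 ≤ p i) (hq : ∀ i, 0 < q i)
    (hp1 : ∑ i, p i = 1) (hq1 : ∑ i, q i = 1)
    (ε ρ : ℝ) (hε : ε ∈ Set.Ioc (0 : ℝ) (1 / 2)) (hρ : 0 < ρ)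
    (ε' : ℝ)
    (hε' : ε' = ε - (Real.sqrt (ρ ^ 2 + 4 * ρ * (ε - ε ^ 2)) -
      (1 - 2 * ε) * ρ) / (2 * ρ + 2))
    (A : Finset ι)
    (hdiv : ∑ i, q i * (p i / q i - 1) ^ 2 ≤ ρ)
    (hA : 1 - ε' ≤ ∑ i ∈ A, q i) :
    1 - ε ≤ ∑ i ∈ A, p i := by
  obtain ⟨hε0, hε12⟩ := hε
  set t : ℝ := ∑ i ∈ A, q i with ht
  set s : ℝ := ∑ i ∈ A, p i with hs
  -- basic bounds on t
  have ht1 : t ≤ 1 := by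
    rw [← hq1]
    exact Finset.sum_le_sum_of_subset_of_nonneg (Finset.subset_univ A)
      (fun i _ _ => (hq i).le)
  have ht0 : 0 ≤ t := Finset.sum_nonneg fun i _ => (hq i).le
  -- Cauchy–Schwarz: (s - t)^2 ≤ ρ * (t * (1 - t))
  classical
  have key : (s - t) ^ 2 ≤ ρ * (t * (1 - t)) := by
    set f : ι → ℝ := fun i => if i ∈ A then 1 else 0 with hf
    set a : ι → ℝ := fun i => Real.sqrt (q i) * (p i / q i - 1) with ha
    set b : ι → ℝ := fun i => Real.sqrt (q i) * (f i - t) with hb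
    have hsq : ∀ i, Real.sqrt (q i) * Real.sqrt (q i) = q i := fun i =>
      Real.mul_self_sqrt (hq i).le
    have hab : ∑ i, a i * b i = s - t := by
      have : ∀ i, a i * b i = (p i - q i) * f i - t * (p i - q i) := by
        intro i
        have hqi := (hq i).ne'
        simp only [ha, hb]
        rw [show Real.sqrt (q i) * (p i / q i - 1) * (Real.sqrt (q i) * (f i - t))
            = (Real.sqrt (q i) * Real.sqrt (q i)) * ((p i / q i - 1) * (f i - t)) by ring,
          hsq i]
        field_simp
      rw [Finset.sum_congr rfl fun i _ => this i, Finset.sum_sub_distrib]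
      have h1 : ∑ i, (p i - q i) * f i = s - t := by
        simp only [hf, mul_ite, mul_one, mul_zero]
        rw [Finset.sum_ite_mem, Finset.univ_inter, Finset.sum_sub_distrib]
      have h2 : ∑ i, t * (p i - q i) = 0 := by
        rw [← Finset.mul_sum, Finset.sum_sub_distrib, hp1, hq1]; ring
      rw [h1, h2, sub_zero]
    have ha2 : ∑ i, (a i) ^ 2 ≤ ρ := by
      refine le_trans (le_of_eq (Finset.sum_congr rfl fun i _ => ?_)) hdiv
      simp only [ha]
      rw [mul_pow, sq, hsq i]
    have hb2 : ∑ i, (b i) ^ 2 = t * (1 - t) := by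
      have : ∀ i, (b i) ^ 2 = q i * f i - 2 * t * (q i * f i) + t ^ 2 * q i := by
        intro i
        have hfi : f i ^ 2 = f i := by simp only [hf]; split <;> norm_num
        simp only [hb]
        rw [mul_pow, sq (Real.sqrt (q i)), hsq i]
        have : (f i - t) ^ 2 = f i ^ 2 - 2 * t * f i + t ^ 2 := by ring
        rw [this, hfi]; ring
      rw [Finset.sum_congr rfl fun i _ => this i]
      have hqf : ∑ i, q i * f i = t := by
        simp only [hf, mul_ite, mul_one, mul_zero]
        rw [Finset.sum_ite_mem, Finset.univ_inter]
      rw [Finset.sum_add_distrib, Finset.sum_sub_distrib, hqf, ← Finset.mul_sum, hqf,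
        ← Finset.mul_sum, hq1]
      ring
    have CS := Finset.sum_mul_sq_le_sq_mul_sq Finset.univ a b
    rw [hab, hb2] at CS
    have hbnn : 0 ≤ t * (1 - t) := mul_nonneg ht0 (by linarith)
    calc (s - t) ^ 2 ≤ (∑ i, a i ^ 2) * (t * (1 - t)) := CS
      _ ≤ ρ * (t * (1 - t)) := by nlinarith
  -- algebraic facts about ε'
  set D : ℝ := ρ ^ 2 + 4 * ρ * (ε - ε ^ 2) with hD
  have hεsq : 0 ≤ ε - ε ^ 2 := by nlinarith
  set S : ℝ := Real.sqrt D with hS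
  have hS2 : S ^ 2 = D := Real.sq_sqrt (by positivity)
  have hS0 : 0 ≤ S := Real.sqrt_nonneg _
  have hSge : (1 - 2 * ε) * ρ ≤ S := by
    have h1 : ((1 - 2 * ε) * ρ) ^ 2 ≤ S ^ 2 := by rw [hS2]; nlinarith
    nlinarith [mul_nonneg (mul_nonneg (sub_nonneg.2 (by linarith : 2 * ε ≤ 1)) hρ.le) hS0]
  set δ : ℝ := ε - ε' with hδ
  have hδval : δ = (S - (1 - 2 * ε) * ρ) / (2 * ρ + 2) := by rw [hδ, hε']; ring
  have hδ0 : 0 ≤ δ := by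
    rw [hδval]; apply div_nonneg (by linarith) (by linarith)
  -- δ² = ρ ε' (1 - ε')
  have hquad : (1 + ρ) * δ ^ 2 + ρ * (1 - 2 * ε) * δ - ρ * (ε - ε ^ 2) = 0 := by
    rw [hδval]
    have hc : (2 * ρ + 2) ≠ 0 := by linarith
    field_simp
    nlinarith [hS2, sq_nonneg S]
  have hε'0 : 0 ≤ ε' := by
    by_contra h
    push_neg at h
    linarith
  have hε'ε : ε' ≤ ε := by linarith
  -- vertex condition: 2(1+ρ)ε' ≤ 2ε + ρ
  have hvert : 2 * (1 + ρ) * ε' ≤ 2 * ε + ρ := by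
    have hc : (2 * ρ + 2 : ℝ) ≠ 0 := by linarith
    have h2 : δ * (2 * ρ + 2) = S - (1 - 2 * ε) * ρ := by
      rw [hδval]; exact div_mul_cancel₀ _ hc
    nlinarith [hS0, h2]
  -- now conclude
  set u : ℝ := 1 - t with hu
  have hu0 : 0 ≤ u := by linarith
  have huε' : u ≤ ε' := by simp only [hu]; linarith
  have hmain : ρ * (t * (1 - t)) ≤ (ε - u) ^ 2 := by
    have h1 : t * (1 - t) = (1 - u) * u := by rw [hu]; ring
    rw [h1]
    have hquad' : (1 + ρ) * (ε - ε') ^ 2 + ρ * (1 - 2 * ε) * (ε - ε') - ρ * (ε - ε ^ 2) = 0 := by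
      rw [← hδ]; exact hquad
    have h3 : (1 + ρ) * (u + ε') ≤ 2 * ε + ρ := by
      nlinarith [mul_le_mul_of_nonneg_left huε' (show (0:ℝ) ≤ 1 + ρ by linarith)]
    have hfac : 0 ≤ (ε' - u) * ((2 * ε + ρ) - (1 + ρ) * (u + ε')) :=
      mul_nonneg (by linarith) (by linarith)
    nlinarith [hfac, hquad']
  have hεu : 0 ≤ ε - u := by linarith
  have hfin : (s - t) ^ 2 ≤ (ε - u) ^ 2 := le_trans key hmain
  nlinarith [hfin, hεu, sq_nonneg (s - t - (u - ε))]
end
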